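/- Let p ∈ ℂ be a primitive third root of unity and let M1, M2 be the 6×6 matrices of Le Bruyn's representation of B₃ (as in the previous statement). For the braid word w = σ₁⁻¹σ₂σ₁⁻¹σ₂²σ₁⁻²σ₂ representing the knot 8₁₇ and its reversed word w' = σ₂σ₁⁻²σ₂²σ₁⁻¹σ₂σ₁⁻¹, the traces satisfy Tr(ρ(w)) ≠ Tr(ρ(w')), where ρ(σ₁) = M1 and ρ(σ₂) = M2. Consequently, w and w' are not conjugate in B₃. -/
import Mathlib


open Matrix

/-- The single braid relation of `B₃`. -/
def braidRel : Set (FreeGroup (Fin 2)) :=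
  {FreeGroup.of 0 * FreeGroup.of 1 * FreeGroup.of 0 *
    (FreeGroup.of 1 * FreeGroup.of 0 * FreeGroup.of 1)⁻¹}

/-- The braid group on three strands. -/
abbrev B3 : Type := PresentedGroup braidRel

/-- The generators of `B₃`. -/
def b3σ (i : Fin 2) : B3 := PresentedGroup.of i

/-- Le Bruyn's matrix for `σ₁`. -/
def M1 (p : ℂ) : Matrix (Fin 6) (Fin 6) ℂ :=
  !![p+1, p-1, p-1, p-1, -p+1, -p+1;
     -2*p-1, -1, -2*p-1, 2*p+1, -2*p-1, 2*p+1;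
     p+2, p+2, -p, -p-2, -p-2, p+2;
     -p-2, -3*p, p+2, -p+2, 3*p, -p-2;
     p-1, -p+1, 3*p+3, -p+1, 3*p+1, -3*p-3;
     -3, -2*p-1, 2*p+1, 3, 2*p+1, -2*p-3]

/-- Le Bruyn's matrix for `σ₂`. -/
def M2 (p : ℂ) : Matrix (Fin 6) (Fin 6) ℂ :=
  !![p+1, p-1, p-1, -p+1, p-1, p-1;
     -2*p-1, -1, -2*p-1, -2*p-1, 2*p+1, -2*p-1;
     p+2, p+2, -p, p+2, p+2, -p-2;
     p+2, 3*p, -p-2, -p+2, 3*p, -p-2;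
     -p+1, p-1, -3*p-3, -p+1, 3*p+1, -3*p-3;
     3, 2*p+1, -2*p-1, 3, 2*p+1, -2*p-3]

/-- The braid word for the knot `8₁₇`: `σ₁⁻¹σ₂σ₁⁻¹σ₂²σ₁⁻²σ₂`. -/
def w817 : B3 := (b3σ 0)⁻¹ * b3σ 1 * (b3σ 0)⁻¹ * (b3σ 1) ^ 2 * (b3σ 0)⁻¹ ^ 2 * b3σ 1

/-- The reversed braid word: `σ₂σ₁⁻²σ₂²σ₁⁻¹σ₂σ₁⁻¹`. -/
def w817rev : B3 := b3σ 1 * (b3σ 0)⁻¹ ^ 2 * (b3σ 1) ^ 2 * (b3σ 0)⁻¹ * b3σ 1 * (b3σ 0)⁻¹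

section AuxVec
variable {α : Type*} (a b c d e f : α)
lemma auxv0 : (![a,b,c,d,e,f] : Fin 6 → α) 0 = a := rfl
lemma auxv1 : (![a,b,c,d,e,f] : Fin 6 → α) 1 = b := rfl
lemma auxv2 : (![a,b,c,d,e,f] : Fin 6 → α) 2 = c := rfl
lemma auxv3 : (![a,b,c,d,e,f] : Fin 6 → α) 3 = d := rfl
lemma auxv4 : (![a,b,c,d,e,f] : Fin 6 → α) 4 = e := rfl
lemma auxv5 : (![a,b,c,d,e,f] : Fin 6 → α) 5 = f := rfl
end AuxVec

noncomputable def auxN1 (p : ℂ) : Matrix (Fin 6) (Fin 6) ℂ :=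
  !![(0) + ((-1/4)) * p, ((-1/2)) + ((-1/4)) * p, ((-1/2)) + ((-1/4)) * p, ((1/2)) + ((1/4)) * p, ((-1/2)) + ((-1/4)) * p, ((-1/2)) + ((-1/4)) * p;
     ((1/4)) + ((1/2)) * p, ((-1/4)) + (0) * p, ((1/4)) + ((1/2)) * p, ((1/4)) + ((1/2)) * p, ((-1/4)) + ((-1/2)) * p, ((1/4)) + ((1/2)) * p;
     ((1/4)) + ((-1/4)) * p, ((1/4)) + ((-1/4)) * p, ((1/4)) + ((1/4)) * p, ((1/4)) + ((-1/4)) * p, ((1/4)) + ((-1/4)) * p, ((-1/4)) + ((1/4)) * p;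
     ((1/4)) + ((-1/4)) * p, ((-3/4)) + ((-3/4)) * p, ((-1/4)) + ((1/4)) * p, ((3/4)) + ((1/4)) * p, ((-3/4)) + ((-3/4)) * p, ((-1/4)) + ((1/4)) * p;
     ((1/2)) + ((1/4)) * p, ((-1/2)) + ((-1/4)) * p, (0) + ((3/4)) * p, ((1/2)) + ((1/4)) * p, ((-1/2)) + ((-3/4)) * p, (0) + ((3/4)) * p;
     ((3/4)) + (0) * p, ((-1/4)) + ((-1/2)) * p, ((1/4)) + ((1/2)) * p, ((3/4)) + (0) * p, ((-1/4)) + ((-1/2)) * p, ((-1/4)) + ((1/2)) * p]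

noncomputable def auxN2 (p : ℂ) : Matrix (Fin 6) (Fin 6) ℂ :=
  !![(0) + ((-1/4)) * p, ((-1/2)) + ((-1/4)) * p, ((-1/2)) + ((-1/4)) * p, ((-1/2)) + ((-1/4)) * p, ((1/2)) + ((1/4)) * p, ((1/2)) + ((1/4)) * p;
     ((1/4)) + ((1/2)) * p, ((-1/4)) + (0) * p, ((1/4)) + ((1/2)) * p, ((-1/4)) + ((-1/2)) * p, ((1/4)) + ((1/2)) * p, ((-1/4)) + ((-1/2)) * p;
     ((1/4)) + ((-1/4)) * p, ((1/4)) + ((-1/4)) * p, ((1/4)) + ((1/4)) * p, ((-1/4)) + ((1/4)) * p, ((-1/4)) + ((1/4)) * p, ((1/4)) + ((-1/4)) * p;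
     ((-1/4)) + ((1/4)) * p, ((3/4)) + ((3/4)) * p, ((1/4)) + ((-1/4)) * p, ((3/4)) + ((1/4)) * p, ((-3/4)) + ((-3/4)) * p, ((-1/4)) + ((1/4)) * p;
     ((-1/2)) + ((-1/4)) * p, ((1/2)) + ((1/4)) * p, (0) + ((-3/4)) * p, ((1/2)) + ((1/4)) * p, ((-1/2)) + ((-3/4)) * p, (0) + ((3/4)) * p;
     ((-3/4)) + (0) * p, ((1/4)) + ((1/2)) * p, ((-1/4)) + ((-1/2)) * p, ((3/4)) + (0) * p, ((-1/4)) + ((-1/2)) * p, ((-1/4)) + ((1/2)) * p]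

noncomputable def auxB2 (p : ℂ) : Matrix (Fin 6) (Fin 6) ℂ :=
  !![(0) + (10) * p, (-4) + (-2) * p, (8) + (10) * p, (0) + (6) * p, (-12) + (-6) * p, (12) + (6) * p;
     (2) + (-8) * p, (10) + (0) * p, (2) + (4) * p, (-6) + (-12) * p, (6) + (0) * p, (6) + (12) * p;
     (2) + (-2) * p, (-10) + (-2) * p, (-10) + (-10) * p, (6) + (-6) * p, (-6) + (6) * p, (-6) + (-6) * p;
     (6) + (6) * p, (-6) + (-6) * p, (6) + (6) * p, (6) + (-2) * p, (-18) + (-6) * p, (14) + (10) * p;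
     (0) + (-6) * p, (0) + (-6) * p, (0) + (6) * p, (-4) + (-14) * p, (-8) + (-6) * p, (12) + (18) * p;
     (6) + (0) * p, (-6) + (0) * p, (-6) + (0) * p, (6) + (-12) * p, (-10) + (4) * p, (2) + (8) * p]

noncomputable def auxC2 (p : ℂ) : Matrix (Fin 6) (Fin 6) ℂ :=
  !![((-5/8)) + ((-5/8)) * p, ((-1/8)) + ((1/8)) * p, ((-1/8)) + ((-5/8)) * p, ((-3/8)) + ((-3/8)) * p, ((-3/8)) + ((3/8)) * p, ((3/8)) + ((-3/8)) * p;
     ((5/8)) + ((1/2)) * p, ((5/8)) + (0) * p, ((-1/8)) + ((-1/4)) * p, ((3/8)) + ((3/4)) * p, ((3/8)) + (0) * p, ((-3/8)) + ((-3/4)) * p;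
     ((1/4)) + ((1/8)) * p, ((-1/2)) + ((1/8)) * p, (0) + ((5/8)) * p, ((3/4)) + ((3/8)) * p, ((-3/4)) + ((-3/8)) * p, (0) + ((3/8)) * p;
     (0) + ((-3/8)) * p, (0) + ((3/8)) * p, (0) + ((-3/8)) * p, ((1/2)) + ((1/8)) * p, ((-3/4)) + ((3/8)) * p, ((1/4)) + ((-5/8)) * p;
     ((3/8)) + ((3/8)) * p, ((3/8)) + ((3/8)) * p, ((-3/8)) + ((-3/8)) * p, ((5/8)) + ((7/8)) * p, ((-1/8)) + ((3/8)) * p, ((-3/8)) + ((-9/8)) * p;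
     ((3/8)) + (0) * p, ((-3/8)) + (0) * p, ((-3/8)) + (0) * p, ((9/8)) + ((3/4)) * p, ((-7/8)) + ((-1/4)) * p, ((-3/8)) + ((-1/2)) * p]

noncomputable def auxA1 (p : ℂ) : Matrix (Fin 6) (Fin 6) ℂ :=
  !![(-2) + (0) * p, (0) + (0) * p, (0) + (3) * p, (-2) + (-1) * p, (-1) + (-2) * p, (2) + (4) * p;
     (0) + (3) * p, (-2) + (0) * p, (0) + (0) * p, (2) + (4) * p, (-2) + (-1) * p, (-1) + (-2) * p;
     (0) + (0) * p, (0) + (3) * p, (-2) + (0) * p, (-1) + (-2) * p, (2) + (4) * p, (-2) + (-1) * p;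
     (-2) + (2) * p, (0) + (3) * p, (-1) + (4) * p, (-2) + (0) * p, (0) + (0) * p, (0) + (3) * p;
     (-1) + (4) * p, (-2) + (2) * p, (0) + (3) * p, (0) + (3) * p, (-2) + (0) * p, (0) + (0) * p;
     (0) + (3) * p, (-1) + (4) * p, (-2) + (2) * p, (0) + (0) * p, (0) + (3) * p, (-2) + (0) * p]

noncomputable def auxA2 (p : ℂ) : Matrix (Fin 6) (Fin 6) ℂ :=
  !![((3/2)) + ((17/4)) * p, (4) + ((17/4)) * p, (1) + ((5/4)) * p, (0) + ((9/4)) * p, (3) + ((15/4)) * p, (0) + ((-9/4)) * p;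
     ((1/4)) + (-1) * p, ((11/4)) + ((-3/2)) * p, ((1/4)) + (-4) * p, ((-9/4)) + (0) * p, ((9/4)) + (0) * p, ((3/4)) + (-3) * p;
     ((-17/4)) + ((-1/4)) * p, ((-5/4)) + ((-1/4)) * p, ((-17/4)) + ((-11/4)) * p, ((-15/4)) + ((-3/4)) * p, ((9/4)) + ((9/4)) * p, ((-9/4)) + ((-9/4)) * p;
     ((-3/4)) + ((21/4)) * p, ((21/4)) + ((15/4)) * p, ((-9/4)) + ((-9/4)) * p, ((-15/4)) + ((13/4)) * p, ((27/4)) + ((21/4)) * p, ((-7/4)) + ((-23/4)) * p;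
     (0) + ((9/4)) * p, (6) + ((3/4)) * p, ((-3/2)) + ((-21/4)) * p, (-4) + ((7/4)) * p, (7) + ((15/4)) * p, ((-3/2)) + ((-27/4)) * p;
     ((-15/4)) + ((3/2)) * p, ((9/4)) + (0) * p, ((-21/4)) + (-6) * p, ((-21/4)) + ((3/2)) * p, ((23/4)) + (4) * p, ((-13/4)) + (-7) * p]

noncomputable def auxA3 (p : ℂ) : Matrix (Fin 6) (Fin 6) ℂ :=
  !![(13) + (-23) * p, (71) + (37) * p, (-73) + (13) * p, (33) + (-57) * p, (39) + (-39) * p, (-69) + (105) * p;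
     (-13) + (-86) * p, (23) + (36) * p, (-37) + (34) * p, (-105) + (-174) * p, (57) + (90) * p, (39) + (78) * p;
     (-34) + (-71) * p, (86) + (73) * p, (-36) + (-13) * p, (-78) + (-39) * p, (174) + (69) * p, (-90) + (-33) * p;
     (-42) + (-135) * p, (168) + (99) * p, (-126) + (39) * p, (-94) + (-181) * p, (204) + (15) * p, (-110) + (167) * p;
     (-39) + (-165) * p, (135) + (93) * p, (-99) + (69) * p, (-167) + (-277) * p, (181) + (87) * p, (-15) + (189) * p;
     (-69) + (-168) * p, (165) + (126) * p, (-93) + (42) * p, (-189) + (-204) * p, (277) + (110) * p, (-87) + (94) * p]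

noncomputable def auxA4 (p : ℂ) : Matrix (Fin 6) (Fin 6) ℂ :=
  !![((-69/2)) + ((179/4)) * p, (157) + ((89/4)) * p, ((-97/2)) + ((-697/4)) * p, ((-297/2)) + ((105/4)) * p, (183) + ((483/4)) * p, (-15) + ((-759/4)) * p;
     ((-503/4)) + ((97/2)) * p, ((317/4)) + ((69/2)) * p, ((-539/4)) + (-157) * p, ((-699/4)) + (15) * p, ((699/4)) + ((297/2)) * p, ((-249/4)) + (-183) * p;
     ((-89/4)) + ((539/4)) * p, ((697/4)) + ((503/4)) * p, ((-179/4)) + ((-317/4)) * p, ((-483/4)) + ((249/4)) * p, ((759/4)) + ((699/4)) * p, ((-105/4)) + ((-699/4)) * p;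
     ((-309/4)) + ((873/4)) * p, ((1461/4)) + ((387/4)) * p, ((-789/4)) + ((-1383/4)) * p, ((-1257/4)) + ((589/4)) * p, ((1935/4)) + ((1263/4)) * p, ((-565/4)) + ((-1913/4)) * p;
     ((-297/2)) + ((789/4)) * p, ((591/2)) + ((309/4)) * p, ((-537/2)) + ((-1461/4)) * p, (-337) + ((565/4)) * p, ((923/2)) + ((1257/4)) * p, (-168) + ((-1935/4)) * p;
     ((-387/4)) + ((537/2)) * p, ((1383/4)) + ((297/2)) * p, ((-873/4)) + ((-591/2)) * p, ((-1263/4)) + (168) * p, ((1913/4)) + (337) * p, ((-589/4)) + ((-923/2)) * p]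

noncomputable def auxA5 (p : ℂ) : Matrix (Fin 6) (Fin 6) ℂ :=
  !![(-179) + (-1182) * p, (-108) + (-792) * p, (-525) + (-1128) * p, (-37) + (-674) * p, (286) + (-112) * p, (-398) + (-400) * p;
     (-525) + (-1128) * p, (-179) + (-1182) * p, (-108) + (-792) * p, (-398) + (-400) * p, (-37) + (-674) * p, (286) + (-112) * p;
     (-108) + (-792) * p, (-525) + (-1128) * p, (-179) + (-1182) * p, (286) + (-112) * p, (-398) + (-400) * p, (-37) + (-674) * p;
     (-916) + (-2708) * p, (-981) + (-2490) * p, (-1202) + (-2776) * p, (-185) + (-1194) * p, (-108) + (-792) * p, (-525) + (-1128) * p;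
     (-1202) + (-2776) * p, (-916) + (-2708) * p, (-981) + (-2490) * p, (-525) + (-1128) * p, (-185) + (-1194) * p, (-108) + (-792) * p;
     (-981) + (-2490) * p, (-1202) + (-2776) * p, (-916) + (-2708) * p, (-108) + (-792) * p, (-525) + (-1128) * p, (-185) + (-1194) * p]

noncomputable def auxR1 (p : ℂ) : Matrix (Fin 6) (Fin 6) ℂ :=
  !![(-3) + ((-7/4)) * p, ((-1/2)) + ((-1/4)) * p, (1) + ((-7/4)) * p, (-5) + ((-13/4)) * p, ((1/2)) + ((1/4)) * p, ((7/2)) + ((7/4)) * p;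
     ((-11/4)) + (-1) * p, ((5/4)) + (3) * p, ((1/4)) + ((1/2)) * p, ((-7/4)) + ((-7/2)) * p, ((7/4)) + (5) * p, ((-1/4)) + ((-1/2)) * p;
     ((1/4)) + ((-1/4)) * p, ((7/4)) + ((11/4)) * p, ((7/4)) + ((-5/4)) * p, ((-1/4)) + ((1/4)) * p, ((-7/4)) + ((7/4)) * p, ((13/4)) + ((-7/4)) * p;
     ((-19/4)) + ((-11/4)) * p, ((3/4)) + ((15/4)) * p, ((13/4)) + ((-7/4)) * p, ((-27/4)) + ((-23/4)) * p, ((-3/4)) + ((15/4)) * p, ((29/4)) + ((7/4)) * p;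
     (-5) + ((-13/4)) * p, (2) + ((19/4)) * p, (3) + ((-3/4)) * p, ((-11/2)) + ((-29/4)) * p, (1) + ((27/4)) * p, ((9/2)) + ((3/4)) * p;
     ((-15/4)) + (-3) * p, ((7/4)) + (5) * p, ((11/4)) + (-2) * p, ((-15/4)) + ((-9/2)) * p, ((-7/4)) + ((11/2)) * p, ((23/4)) + (-1) * p]

noncomputable def auxR2 (p : ℂ) : Matrix (Fin 6) (Fin 6) ℂ :=
  !![(25) + (-41) * p, (-19) + (37) * p, (-67) + (-77) * p, (13) + (-61) * p, (53) + (109) * p, (-85) + (-77) * p;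
     (77) + (10) * p, (41) + (66) * p, (-37) + (-56) * p, (77) + (-8) * p, (61) + (74) * p, (-109) + (-56) * p;
     (56) + (19) * p, (-10) + (67) * p, (-66) + (-25) * p, (56) + (-53) * p, (8) + (85) * p, (-74) + (-13) * p;
     (122) + (-5) * p, (-30) + (117) * p, (-146) + (-157) * p, (134) + (-79) * p, (72) + (219) * p, (-224) + (-157) * p;
     (157) + (11) * p, (5) + (127) * p, (-117) + (-147) * p, (157) + (-67) * p, (79) + (213) * p, (-219) + (-147) * p;
     (147) + (30) * p, (-11) + (146) * p, (-127) + (-122) * p, (147) + (-72) * p, (67) + (224) * p, (-213) + (-134) * p]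

noncomputable def auxR3 (p : ℂ) : Matrix (Fin 6) (Fin 6) ℂ :=
  !![(-146) + (-108) * p, (-126) + (-54) * p, (-96) + (-63) * p, (-76) + (-89) * p, (-53) + (2) * p, (-20) + (14) * p;
     (-96) + (-63) * p, (-146) + (-108) * p, (-126) + (-54) * p, (-20) + (14) * p, (-76) + (-89) * p, (-53) + (2) * p;
     (-126) + (-54) * p, (-96) + (-63) * p, (-146) + (-108) * p, (-53) + (2) * p, (-20) + (14) * p, (-76) + (-89) * p;
     (-316) + (-236) * p, (-294) + (-201) * p, (-281) + (-220) * p, (-146) + (-108) * p, (-126) + (-54) * p, (-96) + (-63) * p;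
     (-281) + (-220) * p, (-316) + (-236) * p, (-294) + (-201) * p, (-96) + (-63) * p, (-146) + (-108) * p, (-126) + (-54) * p;
     (-294) + (-201) * p, (-281) + (-220) * p, (-316) + (-236) * p, (-126) + (-54) * p, (-96) + (-63) * p, (-146) + (-108) * p]

noncomputable def auxR4 (p : ℂ) : Matrix (Fin 6) (Fin 6) ℂ :=
  !![(-323) + (-173) * p, (521) + (-107) * p, (485) + (679) * p, (-717) + (-123) * p, (267) + (-465) * p, (717) + (777) * p;
     (-679) + (-194) * p, (173) + (-150) * p, (107) + (628) * p, (-777) + (-60) * p, (123) + (-594) * p, (465) + (732) * p;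
     (-628) + (-521) * p, (194) + (-485) * p, (150) + (323) * p, (-732) + (-267) * p, (60) + (-717) * p, (594) + (717) * p;
     (-1182) + (-855) * p, (1038) + (-405) * p, (594) + (1365) * p, (-1870) + (-619) * p, (708) + (-1245) * p, (1348) + (1931) * p;
     (-1365) + (-771) * p, (855) + (-327) * p, (405) + (1443) * p, (-1931) + (-583) * p, (619) + (-1251) * p, (1245) + (1953) * p;
     (-1443) + (-1038) * p, (771) + (-594) * p, (327) + (1182) * p, (-1953) + (-708) * p, (583) + (-1348) * p, (1251) + (1870) * p]

noncomputable def auxR5 (p : ℂ) : Matrix (Fin 6) (Fin 6) ℂ :=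
  !![(1009) + (1194) * p, (684) + (792) * p, (603) + (1128) * p, (637) + (674) * p, (398) + (112) * p, (2) + (400) * p;
     (603) + (1128) * p, (1009) + (1194) * p, (684) + (792) * p, (2) + (400) * p, (637) + (674) * p, (398) + (112) * p;
     (684) + (792) * p, (603) + (1128) * p, (1009) + (1194) * p, (398) + (112) * p, (2) + (400) * p, (637) + (674) * p;
     (1792) + (2708) * p, (1509) + (2490) * p, (1574) + (2776) * p, (1003) + (1182) * p, (684) + (792) * p, (603) + (1128) * p;
     (1574) + (2776) * p, (1792) + (2708) * p, (1509) + (2490) * p, (603) + (1128) * p, (1003) + (1182) * p, (684) + (792) * p;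
     (1509) + (2490) * p, (1574) + (2776) * p, (1792) + (2708) * p, (684) + (792) * p, (603) + (1128) * p, (1003) + (1182) * p]

set_option maxHeartbeats 1000000 in
theorem hM1N1 (p : ℂ) (hp : p ^ 2 + p + 1 = 0) :
    M1 p * auxN1 p = 1 := by
  have hp2 : p ^ 2 = -p - 1 := by linear_combination hp
  have hp3 : p ^ 3 = 1 := by linear_combination (p - 1) * hp
  ext i j
  fin_cases i <;> fin_cases j <;>
    simp only [M1, auxN1, Matrix.mul_apply, Fin.sum_univ_six, Matrix.of_apply, Matrix.one_apply,
      Fin.zero_eta, Fin.mk_one, Fin.reduceFinMk, auxv0, auxv1, auxv2, auxv3, auxv4, auxv5,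
      Fin.isValue, Fin.reduceEq, if_true, if_false, reduceIte] <;>
    ring_nf <;> simp only [hp2, hp3] <;> ring_nf

set_option maxHeartbeats 1000000 in
theorem hN1M1 (p : ℂ) (hp : p ^ 2 + p + 1 = 0) :
    auxN1 p * M1 p = 1 := by
  have hp2 : p ^ 2 = -p - 1 := by linear_combination hp
  have hp3 : p ^ 3 = 1 := by linear_combination (p - 1) * hp
  ext i j
  fin_cases i <;> fin_cases j <;>
    simp only [M1, auxN1, Matrix.mul_apply, Fin.sum_univ_six, Matrix.of_apply, Matrix.one_apply,
      Fin.zero_eta, Fin.mk_one, Fin.reduceFinMk, auxv0, auxv1, auxv2, auxv3, auxv4, auxv5,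
      Fin.isValue, Fin.reduceEq, if_true, if_false, reduceIte] <;>
    ring_nf <;> simp only [hp2, hp3] <;> ring_nf

set_option maxHeartbeats 1000000 in
theorem hM2N2 (p : ℂ) (hp : p ^ 2 + p + 1 = 0) :
    M2 p * auxN2 p = 1 := by
  have hp2 : p ^ 2 = -p - 1 := by linear_combination hp
  have hp3 : p ^ 3 = 1 := by linear_combination (p - 1) * hp
  ext i j
  fin_cases i <;> fin_cases j <;>
    simp only [M2, auxN2, Matrix.mul_apply, Fin.sum_univ_six, Matrix.of_apply, Matrix.one_apply,
      Fin.zero_eta, Fin.mk_one, Fin.reduceFinMk, auxv0, auxv1, auxv2, auxv3, auxv4, auxv5,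
      Fin.isValue, Fin.reduceEq, if_true, if_false, reduceIte] <;>
    ring_nf <;> simp only [hp2, hp3] <;> ring_nf

set_option maxHeartbeats 1000000 in
theorem hN2M2 (p : ℂ) (hp : p ^ 2 + p + 1 = 0) :
    auxN2 p * M2 p = 1 := by
  have hp2 : p ^ 2 = -p - 1 := by linear_combination hp
  have hp3 : p ^ 3 = 1 := by linear_combination (p - 1) * hp
  ext i j
  fin_cases i <;> fin_cases j <;>
    simp only [M2, auxN2, Matrix.mul_apply, Fin.sum_univ_six, Matrix.of_apply, Matrix.one_apply,
      Fin.zero_eta, Fin.mk_one, Fin.reduceFinMk, auxv0, auxv1, auxv2, auxv3, auxv4, auxv5,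
      Fin.isValue, Fin.reduceEq, if_true, if_false, reduceIte] <;>
    ring_nf <;> simp only [hp2, hp3] <;> ring_nf

set_option maxHeartbeats 1000000 in
theorem hbraid (p : ℂ) (hp : p ^ 2 + p + 1 = 0) :
    M1 p * M2 p * M1 p = M2 p * M1 p * M2 p := by
  have hp2 : p ^ 2 = -p - 1 := by linear_combination hp
  have hp3 : p ^ 3 = 1 := by linear_combination (p - 1) * hp
  ext i j
  fin_cases i <;> fin_cases j <;>
    simp only [M1, M2, Matrix.mul_apply, Fin.sum_univ_six, Matrix.of_apply, Matrix.one_apply,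
      Fin.zero_eta, Fin.mk_one, Fin.reduceFinMk, auxv0, auxv1, auxv2, auxv3, auxv4, auxv5,
      Fin.isValue, Fin.reduceEq, if_true, if_false, reduceIte] <;>
    ring_nf <;> simp only [hp2, hp3] <;> ring_nf

set_option maxHeartbeats 1000000 in
theorem hB2 (p : ℂ) (hp : p ^ 2 + p + 1 = 0) :
    M2 p * M2 p = auxB2 p := by
  have hp2 : p ^ 2 = -p - 1 := by linear_combination hp
  have hp3 : p ^ 3 = 1 := by linear_combination (p - 1) * hp
  ext i j
  fin_cases i <;> fin_cases j <;>
    simp only [M2, auxB2, Matrix.mul_apply, Fin.sum_univ_six, Matrix.of_apply, Matrix.one_apply,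
      Fin.zero_eta, Fin.mk_one, Fin.reduceFinMk, auxv0, auxv1, auxv2, auxv3, auxv4, auxv5,
      Fin.isValue, Fin.reduceEq, if_true, if_false, reduceIte] <;>
    ring_nf <;> simp only [hp2, hp3] <;> ring_nf

set_option maxHeartbeats 1000000 in
theorem hC2 (p : ℂ) (hp : p ^ 2 + p + 1 = 0) :
    auxN1 p * auxN1 p = auxC2 p := by
  have hp2 : p ^ 2 = -p - 1 := by linear_combination hp
  have hp3 : p ^ 3 = 1 := by linear_combination (p - 1) * hp
  ext i j
  fin_cases i <;> fin_cases j <;>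
    simp only [auxN1, auxC2, Matrix.mul_apply, Fin.sum_univ_six, Matrix.of_apply, Matrix.one_apply,
      Fin.zero_eta, Fin.mk_one, Fin.reduceFinMk, auxv0, auxv1, auxv2, auxv3, auxv4, auxv5,
      Fin.isValue, Fin.reduceEq, if_true, if_false, reduceIte] <;>
    ring_nf <;> simp only [hp2, hp3] <;> ring_nf

set_option maxHeartbeats 1000000 in
theorem hA1 (p : ℂ) (hp : p ^ 2 + p + 1 = 0) :
    auxN1 p * M2 p = auxA1 p := by
  have hp2 : p ^ 2 = -p - 1 := by linear_combination hp
  have hp3 : p ^ 3 = 1 := by linear_combination (p - 1) * hp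
  ext i j
  fin_cases i <;> fin_cases j <;>
    simp only [auxN1, M2, auxA1, Matrix.mul_apply, Fin.sum_univ_six, Matrix.of_apply, Matrix.one_apply,
      Fin.zero_eta, Fin.mk_one, Fin.reduceFinMk, auxv0, auxv1, auxv2, auxv3, auxv4, auxv5,
      Fin.isValue, Fin.reduceEq, if_true, if_false, reduceIte] <;>
    ring_nf <;> simp only [hp2, hp3] <;> ring_nf

set_option maxHeartbeats 1000000 in
theorem hA2 (p : ℂ) (hp : p ^ 2 + p + 1 = 0) :
    auxA1 p * auxN1 p = auxA2 p := by
  have hp2 : p ^ 2 = -p - 1 := by linear_combination hp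
  have hp3 : p ^ 3 = 1 := by linear_combination (p - 1) * hp
  ext i j
  fin_cases i <;> fin_cases j <;>
    simp only [auxA1, auxN1, auxA2, Matrix.mul_apply, Fin.sum_univ_six, Matrix.of_apply, Matrix.one_apply,
      Fin.zero_eta, Fin.mk_one, Fin.reduceFinMk, auxv0, auxv1, auxv2, auxv3, auxv4, auxv5,
      Fin.isValue, Fin.reduceEq, if_true, if_false, reduceIte] <;>
    ring_nf <;> simp only [hp2, hp3] <;> ring_nf

set_option maxHeartbeats 1000000 in
theorem hA3 (p : ℂ) (hp : p ^ 2 + p + 1 = 0) :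
    auxA2 p * auxB2 p = auxA3 p := by
  have hp2 : p ^ 2 = -p - 1 := by linear_combination hp
  have hp3 : p ^ 3 = 1 := by linear_combination (p - 1) * hp
  ext i j
  fin_cases i <;> fin_cases j <;>
    simp only [auxA2, auxB2, auxA3, Matrix.mul_apply, Fin.sum_univ_six, Matrix.of_apply, Matrix.one_apply,
      Fin.zero_eta, Fin.mk_one, Fin.reduceFinMk, auxv0, auxv1, auxv2, auxv3, auxv4, auxv5,
      Fin.isValue, Fin.reduceEq, if_true, if_false, reduceIte] <;>
    ring_nf <;> simp only [hp2, hp3] <;> ring_nf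

set_option maxHeartbeats 1000000 in
theorem hA4 (p : ℂ) (hp : p ^ 2 + p + 1 = 0) :
    auxA3 p * auxC2 p = auxA4 p := by
  have hp2 : p ^ 2 = -p - 1 := by linear_combination hp
  have hp3 : p ^ 3 = 1 := by linear_combination (p - 1) * hp
  ext i j
  fin_cases i <;> fin_cases j <;>
    simp only [auxA3, auxC2, auxA4, Matrix.mul_apply, Fin.sum_univ_six, Matrix.of_apply, Matrix.one_apply,
      Fin.zero_eta, Fin.mk_one, Fin.reduceFinMk, auxv0, auxv1, auxv2, auxv3, auxv4, auxv5,
      Fin.isValue, Fin.reduceEq, if_true, if_false, reduceIte] <;>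
    ring_nf <;> simp only [hp2, hp3] <;> ring_nf

set_option maxHeartbeats 1000000 in
theorem hA5 (p : ℂ) (hp : p ^ 2 + p + 1 = 0) :
    auxA4 p * M2 p = auxA5 p := by
  have hp2 : p ^ 2 = -p - 1 := by linear_combination hp
  have hp3 : p ^ 3 = 1 := by linear_combination (p - 1) * hp
  ext i j
  fin_cases i <;> fin_cases j <;>
    simp only [auxA4, M2, auxA5, Matrix.mul_apply, Fin.sum_univ_six, Matrix.of_apply, Matrix.one_apply,
      Fin.zero_eta, Fin.mk_one, Fin.reduceFinMk, auxv0, auxv1, auxv2, auxv3, auxv4, auxv5,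
      Fin.isValue, Fin.reduceEq, if_true, if_false, reduceIte] <;>
    ring_nf <;> simp only [hp2, hp3] <;> ring_nf

set_option maxHeartbeats 1000000 in
theorem hR1 (p : ℂ) (hp : p ^ 2 + p + 1 = 0) :
    M2 p * auxC2 p = auxR1 p := by
  have hp2 : p ^ 2 = -p - 1 := by linear_combination hp
  have hp3 : p ^ 3 = 1 := by linear_combination (p - 1) * hp
  ext i j
  fin_cases i <;> fin_cases j <;>
    simp only [M2, auxC2, auxR1, Matrix.mul_apply, Fin.sum_univ_six, Matrix.of_apply, Matrix.one_apply,
      Fin.zero_eta, Fin.mk_one, Fin.reduceFinMk, auxv0, auxv1, auxv2, auxv3, auxv4, auxv5,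
      Fin.isValue, Fin.reduceEq, if_true, if_false, reduceIte] <;>
    ring_nf <;> simp only [hp2, hp3] <;> ring_nf

set_option maxHeartbeats 1000000 in
theorem hR2 (p : ℂ) (hp : p ^ 2 + p + 1 = 0) :
    auxR1 p * auxB2 p = auxR2 p := by
  have hp2 : p ^ 2 = -p - 1 := by linear_combination hp
  have hp3 : p ^ 3 = 1 := by linear_combination (p - 1) * hp
  ext i j
  fin_cases i <;> fin_cases j <;>
    simp only [auxR1, auxB2, auxR2, Matrix.mul_apply, Fin.sum_univ_six, Matrix.of_apply, Matrix.one_apply,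
      Fin.zero_eta, Fin.mk_one, Fin.reduceFinMk, auxv0, auxv1, auxv2, auxv3, auxv4, auxv5,
      Fin.isValue, Fin.reduceEq, if_true, if_false, reduceIte] <;>
    ring_nf <;> simp only [hp2, hp3] <;> ring_nf

set_option maxHeartbeats 1000000 in
theorem hR3 (p : ℂ) (hp : p ^ 2 + p + 1 = 0) :
    auxR2 p * auxN1 p = auxR3 p := by
  have hp2 : p ^ 2 = -p - 1 := by linear_combination hp
  have hp3 : p ^ 3 = 1 := by linear_combination (p - 1) * hp
  ext i j
  fin_cases i <;> fin_cases j <;>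
    simp only [auxR2, auxN1, auxR3, Matrix.mul_apply, Fin.sum_univ_six, Matrix.of_apply, Matrix.one_apply,
      Fin.zero_eta, Fin.mk_one, Fin.reduceFinMk, auxv0, auxv1, auxv2, auxv3, auxv4, auxv5,
      Fin.isValue, Fin.reduceEq, if_true, if_false, reduceIte] <;>
    ring_nf <;> simp only [hp2, hp3] <;> ring_nf

set_option maxHeartbeats 1000000 in
theorem hR4 (p : ℂ) (hp : p ^ 2 + p + 1 = 0) :
    auxR3 p * M2 p = auxR4 p := by
  have hp2 : p ^ 2 = -p - 1 := by linear_combination hp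
  have hp3 : p ^ 3 = 1 := by linear_combination (p - 1) * hp
  ext i j
  fin_cases i <;> fin_cases j <;>
    simp only [auxR3, M2, auxR4, Matrix.mul_apply, Fin.sum_univ_six, Matrix.of_apply, Matrix.one_apply,
      Fin.zero_eta, Fin.mk_one, Fin.reduceFinMk, auxv0, auxv1, auxv2, auxv3, auxv4, auxv5,
      Fin.isValue, Fin.reduceEq, if_true, if_false, reduceIte] <;>
    ring_nf <;> simp only [hp2, hp3] <;> ring_nf

set_option maxHeartbeats 1000000 in
theorem hR5 (p : ℂ) (hp : p ^ 2 + p + 1 = 0) :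
    auxR4 p * auxN1 p = auxR5 p := by
  have hp2 : p ^ 2 = -p - 1 := by linear_combination hp
  have hp3 : p ^ 3 = 1 := by linear_combination (p - 1) * hp
  ext i j
  fin_cases i <;> fin_cases j <;>
    simp only [auxR4, auxN1, auxR5, Matrix.mul_apply, Fin.sum_univ_six, Matrix.of_apply, Matrix.one_apply,
      Fin.zero_eta, Fin.mk_one, Fin.reduceFinMk, auxv0, auxv1, auxv2, auxv3, auxv4, auxv5,
      Fin.isValue, Fin.reduceEq, if_true, if_false, reduceIte] <;>
    ring_nf <;> simp only [hp2, hp3] <;> ring_nf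

theorem htrA (p : ℂ) : (auxA5 p).trace = (-1092) + (-7128) * p := by
  simp only [auxA5, Matrix.trace, Matrix.diag, Fin.sum_univ_six, Matrix.of_apply,
    Fin.isValue, auxv0, auxv1, auxv2, auxv3, auxv4, auxv5]
  ring

theorem htrR (p : ℂ) : (auxR5 p).trace = (6036) + (7128) * p := by
  simp only [auxR5, Matrix.trace, Matrix.diag, Fin.sum_univ_six, Matrix.of_apply,
    Fin.isValue, auxv0, auxv1, auxv2, auxv3, auxv4, auxv5]
  ring

theorem stmt_10 (p : ℂ) (hp : p ^ 2 + p + 1 = 0) :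
    ((M1 p)⁻¹ * M2 p * (M1 p)⁻¹ * (M2 p) ^ 2 * ((M1 p)⁻¹) ^ 2 * M2 p).trace ≠
      (M2 p * ((M1 p)⁻¹) ^ 2 * (M2 p) ^ 2 * (M1 p)⁻¹ * M2 p * (M1 p)⁻¹).trace ∧
    ¬ IsConj w817 w817rev := by
  have hinv : (M1 p)⁻¹ = auxN1 p := Matrix.inv_eq_right_inv (hM1N1 p hp)
  have htr1 : ((M1 p)⁻¹ * M2 p * (M1 p)⁻¹ * (M2 p) ^ 2 * ((M1 p)⁻¹) ^ 2 * M2 p).trace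
      = (-1092) + (-7128) * p := by
    rw [hinv, pow_two, pow_two, hB2 p hp, hC2 p hp, hA1 p hp, hA2 p hp, hA3 p hp, hA4 p hp,
      hA5 p hp, htrA]
  have htr2 : (M2 p * ((M1 p)⁻¹) ^ 2 * (M2 p) ^ 2 * (M1 p)⁻¹ * M2 p * (M1 p)⁻¹).trace
      = 6036 + 7128 * p := by
    rw [hinv, pow_two, pow_two, hB2 p hp, hC2 p hp, hR1 p hp, hR2 p hp, hR3 p hp, hR4 p hp,
      hR5 p hp, htrR]
  have hne : ((-1092 : ℂ) + (-7128) * p) ≠ 6036 + 7128 * p := by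
    intro h
    have hp' : p = -(1/2) := by linear_combination (-1/14256 : ℂ) * h
    rw [hp'] at hp
    norm_num at hp
  refine ⟨by rw [htr1, htr2]; exact hne, ?_⟩
  intro hcj
  set U1 : (Matrix (Fin 6) (Fin 6) ℂ)ˣ := ⟨M1 p, auxN1 p, hM1N1 p hp, hN1M1 p hp⟩ with hU1
  set U2 : (Matrix (Fin 6) (Fin 6) ℂ)ˣ := ⟨M2 p, auxN2 p, hM2N2 p hp, hN2M2 p hp⟩ with hU2
  have hf : ∀ r ∈ braidRel, FreeGroup.lift (![U1, U2]) r = 1 := by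
    intro r hr
    rw [braidRel, Set.mem_singleton_iff] at hr
    subst hr
    simp only [MonoidHom.map_mul, MonoidHom.map_inv, FreeGroup.lift_apply_of, Matrix.cons_val_zero,
      Matrix.cons_val_one, Matrix.head_cons]
    rw [mul_inv_eq_one]
    exact Units.ext (hbraid p hp)
  let ρ : B3 →* (Matrix (Fin 6) (Fin 6) ℂ)ˣ := PresentedGroup.toGroup hf
  have hσ0 : ρ (b3σ 0) = U1 := by
    exact PresentedGroup.toGroup.of hf
  have hσ1 : ρ (b3σ 1) = U2 := by
    exact PresentedGroup.toGroup.of hf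
  have h1 : ρ w817 = U1⁻¹ * U2 * U1⁻¹ * U2 ^ 2 * (U1⁻¹) ^ 2 * U2 := by
    rw [w817]; simp only [MonoidHom.map_mul, MonoidHom.map_inv, MonoidHom.map_pow, hσ0, hσ1]
  have h2 : ρ w817rev = U2 * (U1⁻¹) ^ 2 * U2 ^ 2 * U1⁻¹ * U2 * U1⁻¹ := by
    rw [w817rev]; simp only [MonoidHom.map_mul, MonoidHom.map_inv, MonoidHom.map_pow, hσ0, hσ1]
  obtain ⟨c, hc⟩ := isConj_iff.mp hcj
  have h3 := congrArg (fun x => ((ρ x : (Matrix (Fin 6) (Fin 6) ℂ)ˣ) : Matrix (Fin 6) (Fin 6) ℂ).trace) hc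
  simp only [MonoidHom.map_mul, MonoidHom.map_inv, Units.val_mul] at h3
  rw [Matrix.trace_units_conj] at h3
  rw [h1, h2] at h3
  have hU1i : ((U1⁻¹ : (Matrix (Fin 6) (Fin 6) ℂ)ˣ) : Matrix (Fin 6) (Fin 6) ℂ) = (M1 p)⁻¹ := by
    rw [Matrix.coe_units_inv]
  simp only [Units.val_mul, Units.val_pow_eq_pow_val, hU1i] at h3
  rw [htr1, htr2] at h3
  exact hne h3
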